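/- The set of positive integers possessing a prime factor d with d ≡ 3 mod 4 and d > M has natural density 1, for any fixed bound M. -/

import Mathlib

open Filter

section AuxStmt18
open Finset

lemma aux_exists_p3 : ∀ n : ℕ, n % 4 = 3 → ∃ p, p.Prime ∧ p % 4 = 3 ∧ p ∣ n := by
  intro n
  induction n using Nat.strong_induction_on with
  | _ n ih =>
    intro hn
    obtain ⟨p, hp, hpd⟩ := Nat.exists_prime_and_dvd (by omega : n ≠ 1)
    have hpodd : p % 2 = 1 := by
      rcases Nat.Prime.eq_two_or_odd hp with h | h
      · subst h; obtain ⟨m, rfl⟩ := hpd; omega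
      · exact h
    rcases (by omega : p % 4 = 1 ∨ p % 4 = 3) with h1 | h3
    · obtain ⟨m, rfl⟩ := hpd
      have hm : m % 4 = 3 := by
        have := Nat.mul_mod p m 4
        rw [h1, hn] at this
        omega
      have hmlt : m < p * m := by
        have h1p : 1 < p := hp.one_lt
        have hm0 : 0 < m := by omega
        nlinarith
      obtain ⟨q, hq1, hq2, hq3⟩ := ih m hmlt hm
      exact ⟨q, hq1, hq2, hq3.mul_left p⟩
    · exact ⟨p, hp, h3, hpd⟩

-- lower bound: count of n in [1,T] with n % m = r, assuming 0 < r < m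
lemma aux_class_lower (m r T : ℕ) (hr0 : 0 < r) (hrm : r < m) :
    T / m - 1 ≤ #{n ∈ Icc 1 T | n % m = r} := by
  have hm : 0 < m := by omega
  classical
  have : ∀ j ∈ range (T / m - 1), r + j * m ∈ {n ∈ Icc 1 T | n % m = r} := by
    intro j hj
    rw [mem_range] at hj
    simp only [mem_filter, mem_Icc]
    refine ⟨⟨by omega, ?_⟩, ?_⟩
    · have h1 : r + j * m ≤ m + (T / m - 2) * m := by
        have : j ≤ T / m - 2 := by omega
        nlinarith
      have h2 : m + (T / m - 2) * m ≤ (T / m) * m := by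
        have h3 : 1 ≤ T / m := by omega
        nlinarith [Nat.sub_add_cancel (by omega : 2 ≤ T/m)]
      have h4 : (T / m) * m ≤ T := by
        rw [mul_comm]; exact Nat.mul_div_le T m
      omega
    · rw [Nat.add_mul_mod_self_right, Nat.mod_eq_of_lt hrm]
  calc T / m - 1 = #(range (T / m - 1)) := by rw [card_range]
    _ ≤ _ := Finset.card_le_card_of_injOn (fun j => r + j * m) this
        (fun a _ b _ hab => by
          simp only at hab
          exact Nat.eq_of_mul_eq_mul_right hm (by omega))

-- upper bound: count of n in [1,T] in a fixed class mod m is ≤ T/m + 1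
lemma aux_class_upper (m r T : ℕ) (hm : 0 < m) :
    #{n ∈ Icc 1 T | n % m = r} ≤ T / m + 1 := by
  classical
  have : ∀ n ∈ {n ∈ Icc 1 T | n % m = r}, n / m ∈ range (T / m + 1) := by
    intro n hn
    simp only [mem_filter, mem_Icc] at hn
    rw [mem_range]
    have := Nat.div_le_div_right (c := m) hn.1.2
    omega
  rw [← card_range (T / m + 1)]
  refine Finset.card_le_card_of_injOn (fun n => n / m) this ?_
  intro a ha b hb hab
  simp only [Finset.coe_filter, Set.mem_setOf_eq, mem_Icc] at ha hb
  replace hab : a / m = b / m := hab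
  obtain ⟨-, ha2⟩ := ha
  obtain ⟨-, hb2⟩ := hb
  have hmod : a % m = b % m := ha2.trans hb2.symm
  calc a = m * (a / m) + a % m := (Nat.div_add_mod a m).symm
    _ = m * (b / m) + b % m := by rw [hab, hmod]
    _ = b := Nat.div_add_mod b m

-- upper bound: count of n in [1,T] with n % m = r and p ∣ n, for coprime m p
lemma aux_class_dvd_upper (m r p T : ℕ) (hm : 0 < m) (hp : 0 < p) (hco : Nat.Coprime m p) :
    #{n ∈ Icc 1 T | n % m = r ∧ p ∣ n} ≤ T / (m * p) + 1 := by
  classical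
  have hmp : 0 < m * p := Nat.mul_pos hm hp
  have : ∀ n ∈ {n ∈ Icc 1 T | n % m = r ∧ p ∣ n}, n / (m * p) ∈ range (T / (m * p) + 1) := by
    intro n hn
    simp only [mem_filter, mem_Icc] at hn
    rw [mem_range]
    have := Nat.div_le_div_right (c := m * p) hn.1.2
    omega
  rw [← card_range (T / (m * p) + 1)]
  refine Finset.card_le_card_of_injOn (fun n => n / (m * p)) this ?_
  intro a ha b hb hab
  simp only [Finset.coe_filter, Set.mem_setOf_eq, mem_Icc] at ha hb
  replace hab : a / (m * p) = b / (m * p) := hab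
  obtain ⟨-, ha2, ha3⟩ := ha
  obtain ⟨-, hb2, hb3⟩ := hb
  have h1 : a ≡ b [MOD m] := show a % m = b % m from ha2.trans hb2.symm
  have h2 : a ≡ b [MOD p] :=
    (Nat.modEq_zero_iff_dvd.mpr ha3).trans (Nat.modEq_zero_iff_dvd.mpr hb3).symm
  have hmod : a % (m * p) = b % (m * p) :=
    (Nat.modEq_and_modEq_iff_modEq_mul hco).mp ⟨h1, h2⟩
  calc a = m * p * (a / (m * p)) + a % (m * p) := (Nat.div_add_mod a (m * p)).symm
    _ = m * p * (b / (m * p)) + b % (m * p) := by rw [hab, hmod]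
    _ = b := Nat.div_add_mod b (m * p)
lemma aux_tailbound {f : ℕ → ℝ} (hf0 : ∀ n, 0 ≤ f n) (hS : Summable f) {ε : ℝ} (hε : 0 < ε) :
    ∃ K, ∀ s : Finset ℕ, (∀ x ∈ s, K ≤ x) → ∑ x ∈ s, f x < ε := by
  have htt := hS.hasSum.tendsto_sum_nat
  have : ∀ᶠ K in atTop, (∑' n, f n) - ε < ∑ i ∈ range K, f i :=
    htt.eventually (eventually_gt_nhds (by linarith))
  obtain ⟨K, hK⟩ := this.exists
  refine ⟨K, fun s hs => ?_⟩
  have hdisj : Disjoint (range K) s := by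
    rw [Finset.disjoint_left]
    intro x hx hxs
    exact absurd (hs x hxs) (by simpa using hx)
  have h1 : ∑ i ∈ range K, f i + ∑ x ∈ s, f x = ∑ x ∈ range K ∪ s, f x :=
    (Finset.sum_union hdisj).symm
  have h2 : ∑ x ∈ range K ∪ s, f x ≤ ∑' n, f n :=
    Summable.sum_le_tsum _ (fun i _ => hf0 i) hS
  linarith

-- cast helpers
lemma aux_cast_div_lower (a b : ℕ) (hb : 0 < b) : (a : ℝ) / b - 1 ≤ ((a / b : ℕ) : ℝ) := by
  have h1 := Nat.div_add_mod a b
  have h2 := Nat.mod_lt a hb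
  have h : a < b * (a / b) + b := by omega
  have : (a : ℝ) < b * ((a / b : ℕ) : ℝ) + b := by exact_mod_cast h
  have hb' : (0 : ℝ) < b := by exact_mod_cast hb
  rw [sub_le_iff_le_add, div_le_iff₀ hb']
  nlinarith

lemma aux_cast_div_upper (a b : ℕ) : ((a / b : ℕ) : ℝ) ≤ (a : ℝ) / b :=
  Nat.cast_div_le

lemma aux_not_summable :
    ¬ Summable (fun p : ℕ => if p.Prime ∧ p % 4 = 3 then (1 / p : ℝ) else 0) := by
  classical
  intro hS
  set f : ℕ → ℝ := fun p => if p.Prime ∧ p % 4 = 3 then (1 / p : ℝ) else 0 with hfdef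
  have hf0 : ∀ n, 0 ≤ f n := by
    intro n; simp only [hfdef]; split <;> positivity
  -- choose K0 with tail sum < 1/2
  obtain ⟨K0, h0⟩ := aux_tailbound hf0 hS (by norm_num : (0:ℝ) < 1/2)
  set S0 : Finset ℕ := {p ∈ range K0 | p.Prime ∧ p % 4 = 3} with hS0def
  set P : ℕ := ∏ p ∈ S0, p with hPdef
  have hPpos : 0 < P := Finset.prod_pos (fun p hp => by
    simp only [hS0def, mem_filter] at hp; exact hp.2.1.pos)
  have hPodd : ¬ 2 ∣ P := by
    intro h2
    obtain ⟨q, hq, h2q⟩ := (Nat.prime_two.prime).exists_mem_finset_dvd h2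
    simp only [hS0def, mem_filter] at hq
    have : q = 2 := ((Nat.prime_dvd_prime_iff_eq Nat.prime_two hq.2.1).mp h2q).symm
    omega
  have hco : Nat.Coprime 4 P := by
    have : (4 : ℕ) = 2 ^ 2 := by norm_num
    rw [this, Nat.coprime_pow_left_iff (by norm_num)]
    exact (Nat.Prime.coprime_iff_not_dvd Nat.prime_two).mpr hPodd
  set m : ℕ := 4 * P with hmdef
  have hm : 0 < m := by positivity
  have h4m : 4 ∣ m := ⟨P, rfl⟩
  set c : ℕ := (Nat.chineseRemainder hco 3 1 : ℕ) with hcdef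
  have hc4 : c % 4 = 3 := (Nat.chineseRemainder hco 3 1).2.1
  have hcP : c % P = 1 % P := (Nat.chineseRemainder hco 3 1).2.2
  set r : ℕ := c % m with hrdef
  have hr4 : r % 4 = 3 := by
    rw [hrdef, Nat.mod_mod_of_dvd c h4m, hc4]
  have hr0 : 0 < r := by omega
  have hrm : r < m := Nat.mod_lt c hm
  have hrp : ∀ p ∈ S0, r % p = 1 := by
    intro p hp
    have hpmem := hp
    simp only [hS0def, mem_filter] at hpmem
    have hpP : p ∣ P := Finset.dvd_prod_of_mem _ hp
    have hpm : p ∣ m := hpP.mul_left 4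
    have h1 : r % p = c % p := by rw [hrdef, Nat.mod_mod_of_dvd c hpm]
    have h2 : c % p = 1 % p := by
      have := Nat.ModEq.of_dvd hpP (hcP : c ≡ 1 [MOD P])
      exact this
    have hp2 : 2 ≤ p := hpmem.2.1.two_le
    rw [h1, h2, Nat.mod_eq_of_lt (by omega)]
  -- choose K1 with tail sum < 1/(16 m)
  obtain ⟨K1', h1t⟩ := aux_tailbound hf0 hS (by positivity : (0:ℝ) < 1/(16*(m:ℝ)))
  set K1 : ℕ := max K1' K0 with hK1def
  -- main estimate for every T
  have key : ∀ T : ℕ, (T : ℝ) / m - 2 ≤ (T:ℝ)/(2*m) + K1 + (T:ℝ)/(16*m) := by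
    intro T
    set A : Finset ℕ := {n ∈ Icc 1 T | n % m = r} with hAdef
    set Pr : Finset ℕ := {p ∈ Icc K0 T | p.Prime ∧ p % 4 = 3} with hPrdef
    have hcover : A ⊆ Pr.biUnion (fun p => {n ∈ Icc 1 T | n % m = r ∧ p ∣ n}) := by
      intro n hn
      simp only [hAdef, mem_filter, mem_Icc] at hn
      obtain ⟨⟨hn1, hnT⟩, hnr⟩ := hn
      have hn4 : n % 4 = 3 := by
        rw [← Nat.mod_mod_of_dvd n h4m, hnr, hr4]
      obtain ⟨p, hp, hp4, hpn⟩ := aux_exists_p3 n hn4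
      have hpK0 : K0 ≤ p := by
        by_contra hlt
        have hpS0 : p ∈ S0 := by
          simp only [hS0def, mem_filter, mem_range]; exact ⟨by omega, hp, hp4⟩
        have := hrp p hpS0
        have hpm : p ∣ m := (Finset.dvd_prod_of_mem _ hpS0).mul_left 4
        have : n % p = r % p := by
          conv_lhs => rw [← Nat.mod_mod_of_dvd n hpm]
          rw [hnr]
        have : n % p = 1 := by omega
        have := (Nat.mod_eq_zero_of_dvd hpn)
        omega
      have hpT : p ≤ T := le_trans (Nat.le_of_dvd (by omega) hpn) hnT
      rw [Finset.mem_biUnion]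
      refine ⟨p, ?_, ?_⟩
      · simp only [hPrdef, mem_filter, mem_Icc]; exact ⟨⟨hpK0, hpT⟩, hp, hp4⟩
      · simp only [mem_filter, mem_Icc]; exact ⟨⟨hn1, hnT⟩, hnr, hpn⟩
    -- bounds on each fiber
    have hfib1 : ∀ p ∈ Pr, #{n ∈ Icc 1 T | n % m = r ∧ p ∣ n} ≤ T / (m * p) + 1 := by
      intro p hp
      simp only [hPrdef, mem_filter, mem_Icc] at hp
      obtain ⟨⟨hpK0, hpT⟩, hp1, hp4⟩ := hp
      have hpm : Nat.Coprime m p := by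
        have hp2 : p ≠ 2 := by omega
        have hnd4 : ¬ p ∣ 4 := by
          intro h
          have hle : p ≤ 4 := Nat.le_of_dvd (by norm_num) h
          have hp3 : p = 3 := by omega
          rw [hp3] at h
          norm_num at h
        have hndP : ¬ p ∣ P := by
          intro h
          obtain ⟨q, hq, hpq⟩ := hp1.prime.exists_mem_finset_dvd h
          have hqq := hq
          simp only [hS0def, mem_filter, mem_range] at hqq
          have : p = q := (Nat.prime_dvd_prime_iff_eq hp1 hqq.2.1).mp hpq
          omega
        have hndm : ¬ p ∣ m := by
          intro hh
          rcases (hp1.prime).dvd_mul.mp hh with h' | h'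
          · exact hnd4 h'
          · exact hndP h'
        exact ((Nat.Prime.coprime_iff_not_dvd hp1).mpr hndm).symm
      exact aux_class_dvd_upper m r p T hm hp1.pos hpm
    have hfib2 : ∀ p ∈ Pr, #{n ∈ Icc 1 T | n % m = r ∧ p ∣ n} ≤ T / p := by
      intro p hp
      calc #{n ∈ Icc 1 T | n % m = r ∧ p ∣ n} ≤ #{n ∈ Icc 1 T | p ∣ n} := by
            apply Finset.card_le_card
            intro n hn
            simp only [mem_filter] at hn ⊢
            exact ⟨hn.1, hn.2.2⟩
        _ = T / p := by
            have hIcc : Finset.Icc 1 T = Finset.Ioc 0 T := by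
              ext x; simp only [mem_Icc, mem_Ioc]; omega
            rw [hIcc]
            exact Nat.Ioc_filter_dvd_card_eq_div T p
    -- assemble the counting bounds
    set Pr1 : Finset ℕ := {p ∈ Pr | p < K1} with hPr1def
    set Pr2 : Finset ℕ := {p ∈ Pr | ¬ p < K1} with hPr2def
    have hnat : T / m - 1 ≤ ∑ p ∈ Pr1, (T / (m * p) + 1) + ∑ p ∈ Pr2, (T / p) := by
      have h1 : T / m - 1 ≤ #A := aux_class_lower m r T hr0 hrm
      have h2 : #A ≤ ∑ p ∈ Pr, #{n ∈ Icc 1 T | n % m = r ∧ p ∣ n} :=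
        le_trans (Finset.card_le_card hcover) (Finset.card_biUnion_le)
      have h3 : ∑ p ∈ Pr, #{n ∈ Icc 1 T | n % m = r ∧ p ∣ n}
          = ∑ p ∈ Pr1, #{n ∈ Icc 1 T | n % m = r ∧ p ∣ n}
            + ∑ p ∈ Pr2, #{n ∈ Icc 1 T | n % m = r ∧ p ∣ n} :=
        (Finset.sum_filter_add_sum_filter_not Pr _ _).symm
      have h4 : ∑ p ∈ Pr1, #{n ∈ Icc 1 T | n % m = r ∧ p ∣ n}
          ≤ ∑ p ∈ Pr1, (T / (m * p) + 1) :=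
        Finset.sum_le_sum (fun p hp => hfib1 p (Finset.filter_subset _ _ hp))
      have h5 : ∑ p ∈ Pr2, #{n ∈ Icc 1 T | n % m = r ∧ p ∣ n}
          ≤ ∑ p ∈ Pr2, (T / p) :=
        Finset.sum_le_sum (fun p hp => hfib2 p (Finset.filter_subset _ _ hp))
      omega
    -- move to the reals
    have hm' : (0:ℝ) < m := by exact_mod_cast hm
    have hTnn : (0:ℝ) ≤ T := Nat.cast_nonneg T
    have hA : (T : ℝ) / m - 2 ≤
        ((∑ p ∈ Pr1, (T / (m * p) + 1) + ∑ p ∈ Pr2, (T / p) : ℕ) : ℝ) := by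
      have hc1 := aux_cast_div_lower T m hm
      have hcast : ((T / m : ℕ) : ℝ) ≤
          ((∑ p ∈ Pr1, (T / (m * p) + 1) + ∑ p ∈ Pr2, (T / p) : ℕ) : ℝ) + 1 := by
        exact_mod_cast (by omega :
          T / m ≤ (∑ p ∈ Pr1, (T / (m * p) + 1) + ∑ p ∈ Pr2, (T / p)) + 1)
      linarith
    have hPr1sum : ((∑ p ∈ Pr1, (T / (m * p) + 1) : ℕ) : ℝ) ≤ (T:ℝ)/(2*m) + K1 := by
      push_cast
      have e1 : ∑ p ∈ Pr1, (((T / (m * p) : ℕ)) : ℝ) ≤ ∑ p ∈ Pr1, ((T:ℝ)/m) * (1/p) := by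
        refine Finset.sum_le_sum (fun p hp => ?_)
        refine le_trans (aux_cast_div_upper T (m * p)) (le_of_eq ?_)
        push_cast
        rw [div_mul_div_comm]
        ring_nf
      have e2 : ∑ p ∈ Pr1, ((T:ℝ)/m) * (1/p) = ((T:ℝ)/m) * ∑ p ∈ Pr1, ((1:ℝ)/p) :=
        (Finset.mul_sum _ _ _).symm
      have e3 : ∑ p ∈ Pr1, ((1:ℝ)/p) = ∑ p ∈ Pr1, f p := by
        refine Finset.sum_congr rfl (fun p hp => ?_)
        simp only [hPr1def, hPrdef, mem_filter, mem_Icc] at hp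
        simp only [hfdef, if_pos hp.1.2]
      have e4 : ∑ p ∈ Pr1, f p < 1/2 := by
        refine h0 Pr1 (fun p hp => ?_)
        simp only [hPr1def, hPrdef, mem_filter, mem_Icc] at hp
        exact hp.1.1.1
      have e5 : (#Pr1 : ℝ) ≤ K1 := by
        have hsub : Pr1 ⊆ range K1 := by
          intro p hp
          simp only [hPr1def, mem_filter] at hp
          simpa using hp.2
        exact_mod_cast (Finset.card_le_card hsub).trans (by simp)
      have e6 : ((T:ℝ)/m) * ∑ p ∈ Pr1, f p ≤ ((T:ℝ)/m) * (1/2) :=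
        mul_le_mul_of_nonneg_left e4.le (by positivity)
      have e7 : ((T:ℝ)/m) * (1/2) = (T:ℝ)/(2*m) := by ring
      rw [Finset.sum_add_distrib, Finset.sum_const, nsmul_eq_mul, mul_one]
      calc ∑ p ∈ Pr1, (((T / (m * p) : ℕ)) : ℝ) + #Pr1
          ≤ ((T:ℝ)/m) * ∑ p ∈ Pr1, f p + K1 := by rw [← e3, ← e2]; linarith
        _ ≤ (T:ℝ)/(2*m) + K1 := by rw [← e7]; linarith
    have hPr2sum : ((∑ p ∈ Pr2, (T / p) : ℕ) : ℝ) ≤ (T:ℝ)/(16*m) := by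
      push_cast
      have e1 : ∑ p ∈ Pr2, (((T / p : ℕ)) : ℝ) ≤ ∑ p ∈ Pr2, (T:ℝ) * (1/p) := by
        refine Finset.sum_le_sum (fun p hp => ?_)
        exact le_trans (aux_cast_div_upper T p) (le_of_eq (by ring))
      have e3 : ∑ p ∈ Pr2, (T:ℝ) * (1/p) = (T:ℝ) * ∑ p ∈ Pr2, f p := by
        rw [Finset.mul_sum]
        refine Finset.sum_congr rfl (fun p hp => ?_)
        simp only [hPr2def, hPrdef, mem_filter, mem_Icc] at hp
        simp only [hfdef, if_pos hp.1.2]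
      have e4 : ∑ p ∈ Pr2, f p < 1/(16*(m:ℝ)) := by
        refine h1t Pr2 (fun p hp => ?_)
        simp only [hPr2def, mem_filter] at hp
        have hK1p : K1 ≤ p := by omega
        exact le_trans (le_max_left _ _) hK1p
      have e5 : (T:ℝ) * ∑ p ∈ Pr2, f p ≤ (T:ℝ) * (1/(16*(m:ℝ))) :=
        mul_le_mul_of_nonneg_left e4.le hTnn
      calc ∑ p ∈ Pr2, (((T / p : ℕ)) : ℝ) ≤ (T:ℝ) * ∑ p ∈ Pr2, f p := by
            rw [← e3]; exact e1
        _ ≤ (T:ℝ) * (1/(16*(m:ℝ))) := e5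
        _ = (T:ℝ)/(16*m) := by ring
    rw [Nat.cast_add] at hA
    linarith
  -- derive contradiction
  obtain ⟨T, hT⟩ := exists_nat_gt (((K1:ℝ) + 2) * (16 * m))
  have hk := key T
  have hm' : (1:ℝ) ≤ m := by exact_mod_cast hm
  have h16 : (0:ℝ) < 16 * m := by linarith
  have e1 : (T:ℝ)/m * (16*m) = 16 * T := by field_simp
  have e2 : (T:ℝ)/(2*m) * (16*m) = 8 * T := by field_simp; ring
  have e3 : (T:ℝ)/(16*m) * (16*m) = T := by field_simp
  nlinarith [mul_le_mul_of_nonneg_right hk h16.le]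


lemma aux_totient_prod (S : Finset ℕ) (h : ∀ p ∈ S, p.Prime) :
    (∏ p ∈ S, p).totient = ∏ p ∈ S, (p - 1) := by
  classical
  induction S using Finset.induction_on with
  | empty => simp
  | @insert a s ha ih =>
    rw [Finset.prod_insert ha, Finset.prod_insert ha]
    have hap : a.Prime := h a (Finset.mem_insert_self a s)
    have hco : Nat.Coprime a (∏ p ∈ s, p) := by
      refine Nat.Coprime.prod_right (fun i hi => ?_)
      have hip : i.Prime := h i (Finset.mem_insert_of_mem hi)
      exact (Nat.coprime_primes hap hip).mpr (fun he => ha (he ▸ hi))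
    rw [Nat.totient_mul hco, Nat.totient_prime hap,
      ih (fun p hp => h p (Finset.mem_insert_of_mem hp))]

theorem stmt_18 (M : ℕ) :
    Tendsto (fun T : ℕ =>
      (({n : ℕ | ∃ d : ℕ, d.Prime ∧ d % 4 = 3 ∧ M < d ∧ d ∣ n} ∩ Set.Icc 1 T).ncard : ℝ) / T)
      atTop (nhds 1) := by
  classical
  rw [Metric.tendsto_atTop]
  intro ε hε
  set δ : ℝ := min (ε/4) (1/2) with hδdef
  have hδ0 : 0 < δ := lt_min (by positivity) (by norm_num)
  have hδε : δ ≤ ε/4 := min_le_left _ _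
  -- the tail series over primes ≡ 3 mod 4 exceeding M is not summable
  set fM : ℕ → ℝ := fun p => if p.Prime ∧ p % 4 = 3 ∧ M < p then (1/p : ℝ) else 0 with hfMdef
  have hfM0 : ∀ n, 0 ≤ fM n := by
    intro n; simp only [hfMdef]; split <;> positivity
  have hnsM : ¬ Summable fM := by
    intro hsM
    set g : ℕ → ℝ := fun p => if p.Prime ∧ p % 4 = 3 ∧ p ≤ M then (1/p : ℝ) else 0 with hgdef
    have hgfin : Summable g := by
      refine summable_of_finite_support (Set.Finite.subset (Set.finite_Icc 0 M) ?_)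
      intro p hp
      simp only [Function.mem_support, hgdef] at hp
      by_contra hm
      simp only [Set.mem_Icc] at hm
      rw [if_neg (by omega : ¬ (p.Prime ∧ p % 4 = 3 ∧ p ≤ M))] at hp
      exact hp rfl
    have heq : (fun p : ℕ => if p.Prime ∧ p % 4 = 3 then (1/p : ℝ) else 0) = fun p => fM p + g p := by
      funext p
      have hd : M < p ∨ p ≤ M := by omega
      have hd2 : ¬(M < p ∧ p ≤ M) := by omega
      simp only [hfMdef, hgdef]
      split_ifs <;> first | tauto | ring
    exact aux_not_summable (heq ▸ hsM.add hgfin)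
  -- find a finite set of such primes with large reciprocal sum
  have htop := (not_summable_iff_tendsto_nat_atTop_of_nonneg hfM0).mp hnsM
  obtain ⟨N, hN⟩ := (htop.eventually_ge_atTop (Real.log (1/δ) + 1)).exists
  set S : Finset ℕ := {p ∈ range N | p.Prime ∧ p % 4 = 3 ∧ M < p} with hSdef
  have hSsum : Real.log (1/δ) < ∑ p ∈ S, (1/p : ℝ) := by
    have : ∑ p ∈ S, (1/p : ℝ) = ∑ i ∈ range N, fM i := by
      rw [hSdef, Finset.sum_filter]
    rw [this]; linarith
  have hSp : ∀ p ∈ S, p.Prime ∧ p % 4 = 3 ∧ M < p := by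
    intro p hp; simp only [hSdef, mem_filter] at hp; exact hp.2
  set Q : ℕ := ∏ p ∈ S, p with hQdef
  have hQpos : 0 < Q := Finset.prod_pos (fun p hp => (hSp p hp).1.pos)
  have hQR : (0:ℝ) < Q := by exact_mod_cast hQpos
  -- the totient ratio is at most δ
  have hφQ : (Q.totient : ℝ) / Q = ∏ p ∈ S, (1 - 1/(p:ℝ)) := by
    rw [hQdef, aux_totient_prod S (fun p hp => (hSp p hp).1)]
    rw [Nat.cast_prod, Nat.cast_prod, ← Finset.prod_div_distrib]
    refine Finset.prod_congr rfl (fun p hp => ?_)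
    have hp2 : (2:ℝ) ≤ p := by exact_mod_cast (hSp p hp).1.two_le
    rw [Nat.cast_sub (hSp p hp).1.one_lt.le]
    field_simp
    simp
  have hratio : (Q.totient : ℝ) / Q ≤ δ := by
    rw [hφQ]
    have h1 : ∏ p ∈ S, (1 - 1/(p:ℝ)) ≤ ∏ p ∈ S, Real.exp (-(1/(p:ℝ))) := by
      refine Finset.prod_le_prod (fun p hp => ?_) (fun p hp => ?_)
      · have hp2 : (2:ℝ) ≤ p := by exact_mod_cast (hSp p hp).1.two_le
        have : 1/(p:ℝ) ≤ 1/2 := by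
          apply div_le_div_of_nonneg_left <;> linarith
        linarith
      · have := Real.add_one_le_exp (-(1/(p:ℝ)))
        linarith
    have h2 : ∏ p ∈ S, Real.exp (-(1/(p:ℝ))) = Real.exp (-∑ p ∈ S, (1/p:ℝ)) := by
      rw [← Real.exp_sum, Finset.sum_neg_distrib]
    have h3 : Real.exp (-∑ p ∈ S, (1/p:ℝ)) ≤ Real.exp (-Real.log (1/δ)) :=
      Real.exp_le_exp.mpr (by linarith)
    have h4 : Real.exp (-Real.log (1/δ)) = δ := by
      rw [Real.exp_neg, Real.exp_log (by positivity), one_div, inv_inv]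
    linarith
  -- choose the threshold
  set N₀ : ℕ := max 1 (⌈(δ + Q) * 2 / ε⌉₊) with hN0def
  refine ⟨N₀, fun T hT => ?_⟩
  have hT1 : 1 ≤ T := le_trans (le_max_left _ _) hT
  have hTR : (0:ℝ) < T := by exact_mod_cast hT1
  have hTtail : (δ + Q) * 2 / ε ≤ T := by
    calc (δ + Q) * 2 / ε ≤ (⌈(δ + Q) * 2 / ε⌉₊ : ℝ) := Nat.le_ceil _
      _ ≤ (N₀ : ℝ) := by exact_mod_cast le_max_right 1 _
      _ ≤ (T : ℝ) := by exact_mod_cast hT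
  have hQT : (δ + Q) / T ≤ ε / 2 := by
    rw [div_le_iff₀ hTR]
    have h1 : (δ + Q) * 2 ≤ T * ε := (div_le_iff₀ hε).mp hTtail
    linarith
  set X : Set ℕ := {n : ℕ | ∃ d : ℕ, d.Prime ∧ d % 4 = 3 ∧ M < d ∧ d ∣ n} ∩ Set.Icc 1 T
    with hXdef
  set bad : Finset ℕ := {n ∈ Icc 1 T | Q.Coprime n} with hbaddef
  set good : Finset ℕ := {n ∈ Icc 1 T | ¬ Q.Coprime n} with hgooddef
  have hIccT : #(Icc 1 T) = T := by rw [Nat.card_Icc]; omega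
  have hbadle : #bad ≤ Q.totient * ((T+1) / Q + 1) := by
    refine le_trans (Finset.card_le_card ?_) (Nat.Ico_filter_coprime_le 0 (T+1) hQpos.ne')
    intro n hn
    simp only [hbaddef, mem_filter, mem_Icc] at hn
    simp only [mem_filter, mem_Ico]
    exact ⟨⟨by omega, by omega⟩, hn.2⟩
  have hgoodcard : #bad + #good = T := by
    rw [hbaddef, hgooddef, Finset.card_filter_add_card_filter_not, hIccT]
  have hsub : ↑good ⊆ X := by
    intro n hn
    rw [Finset.mem_coe] at hn
    simp only [hgooddef, mem_filter, mem_Icc] at hn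
    obtain ⟨⟨hn1, hnT⟩, hnc⟩ := hn
    have hg1 : Nat.gcd Q n ≠ 1 := hnc
    set p := (Nat.gcd Q n).minFac with hpdef
    have hp : p.Prime := Nat.minFac_prime hg1
    have hpQ : p ∣ Q := (Nat.minFac_dvd _).trans (Nat.gcd_dvd_left _ _)
    have hpn : p ∣ n := (Nat.minFac_dvd _).trans (Nat.gcd_dvd_right _ _)
    obtain ⟨q, hq, hpq⟩ := hp.prime.exists_mem_finset_dvd hpQ
    have hqS := hSp q hq
    have hpq' : p = q := (Nat.prime_dvd_prime_iff_eq hp hqS.1).mp hpq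
    refine ⟨⟨p, hp, ?_, ?_, hpn⟩, Set.mem_Icc.mpr ⟨hn1, hnT⟩⟩
    · rw [hpq']; exact hqS.2.1
    · rw [hpq']; exact hqS.2.2
  have hfin : X.Finite := (Set.finite_Icc 1 T).subset Set.inter_subset_right
  have hlow : #good ≤ X.ncard := by
    rw [← Set.ncard_coe_finset good]
    exact Set.ncard_le_ncard hsub hfin
  have hup : X.ncard ≤ T := by
    have h1 : X.ncard ≤ (Set.Icc 1 T).ncard :=
      Set.ncard_le_ncard Set.inter_subset_right (Set.finite_Icc 1 T)
    rwa [← Finset.coe_Icc, Set.ncard_coe_finset, hIccT] at h1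
  -- real estimates
  have hφle : (Q.totient:ℝ) ≤ Q := by exact_mod_cast Nat.totient_le Q
  have hbadR : (#bad : ℝ) ≤ δ * ((T:ℝ)+1) + Q := by
    have h1 : (#bad : ℝ) ≤ (Q.totient : ℝ) * ((((T+1)/Q : ℕ):ℝ) + 1) := by
      exact_mod_cast hbadle
    have h2 : (((T+1)/Q : ℕ):ℝ) ≤ ((T:ℝ)+1)/Q := by
      have h := aux_cast_div_upper (T+1) Q
      push_cast at h ⊢
      linarith
    have h3 : (Q.totient:ℝ) * ((((T+1)/Q : ℕ):ℝ) + 1) ≤ (Q.totient:ℝ) * (((T:ℝ)+1)/Q + 1) :=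
      mul_le_mul_of_nonneg_left (by linarith) (by positivity)
    have h4 : (Q.totient:ℝ) * (((T:ℝ)+1)/Q + 1) = (Q.totient:ℝ)/Q * ((T:ℝ)+1) + Q.totient := by
      field_simp
    have h5 : (Q.totient:ℝ)/Q * ((T:ℝ)+1) ≤ δ * ((T:ℝ)+1) :=
      mul_le_mul_of_nonneg_right hratio (by positivity)
    linarith
  have hgoodR : (T:ℝ) - (δ*((T:ℝ)+1) + Q) ≤ (#good : ℝ) := by
    have hc : (#bad:ℝ) + (#good:ℝ) = T := by exact_mod_cast hgoodcard
    linarith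
  have hXlow : (T:ℝ) - (δ*((T:ℝ)+1) + Q) ≤ (X.ncard : ℝ) :=
    le_trans hgoodR (by exact_mod_cast hlow)
  have hXup : (X.ncard : ℝ) ≤ T := by exact_mod_cast hup
  have hr1 : (X.ncard:ℝ)/T ≤ 1 := by
    rw [div_le_one hTR]; exact hXup
  have hr2 : 1 - (δ + (δ+Q)/T) ≤ (X.ncard:ℝ)/T := by
    rw [le_div_iff₀ hTR]
    have he : (1 - (δ + (δ+Q)/T)) * T = (T:ℝ) - δ*T - (δ+Q) := by
      field_simp
      ring
    rw [he]
    have hexp : δ*((T:ℝ)+1) = δ*(T:ℝ) + δ := by ring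
    linarith
  have hfinal : 1 - (X.ncard:ℝ)/T < ε := by
    have h6 : δ + (δ+Q)/T ≤ ε/4 + ε/2 := by linarith
    linarith
  rw [Real.dist_eq, abs_lt]
  constructor
  · linarith
  · linarith

end AuxStmt18
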